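/- Let ε > 0 and let G = (V_1, V_2; E) be a bipartite graph with |V_1| = |V_2| = N and at least εN² edges. Then for all positive integers t and x, there exists a subset A ⊆ V_2 with |A| ≥ ε^{2t} N / 2 such that the number of t-element subsets S of A whose common neighborhood (in V_1) has size less than x is at most 2 ε^{-2t} (x/N)^{2t} · C(N, t). -/

import Mathlib

open Finset
set_option maxRecDepth 10000

private lemma drc_main {V₁ V₂ : Type*} [Fintype V₁] [Fintype V₂] [DecidableEq V₂]
    (E : V₁ → V₂ → Prop) [∀ v u, Decidable (E v u)] (N : ℕ)
    (h1 : Fintype.card V₁ = N) (h2 : Fintype.card V₂ = N) (ε : ℝ) (hε : 0 < ε)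
    (hN : 0 < N) (t x : ℕ) (ht : 0 < t) (hx : 0 < x) (htN : t ≤ N)
    (hE : ε * (N : ℝ) ^ 2 ≤ (#(univ.filter fun p : V₁ × V₂ => E p.1 p.2) : ℝ)) :
    ∃ A : Finset V₂, ε ^ (2 * t) * N / 2 ≤ (#A : ℝ) ∧
      ((#(univ.filter fun S : Finset V₂ => S ⊆ A ∧ #S = t ∧
          #(univ.filter fun v : V₁ => ∀ u ∈ S, E v u) < x) : ℕ) : ℝ) ≤
        2 * ε⁻¹ ^ (2 * t) * ((x : ℝ) / N) ^ (2 * t) * (N.choose t) := by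
  classical
  set d : V₂ → ℕ := fun u => #(univ.filter fun v => E v u) with hd
  set nbr : Finset V₂ → Finset V₁ := fun S => univ.filter fun v => ∀ u ∈ S, E v u with hnbr
  set A : (Fin (2*t) → V₁) → Finset V₂ := fun T => univ.filter fun u => ∀ i, E (T i) u with hA
  set Bad : Finset (Finset V₂) := univ.filter fun S => #S = t ∧ #(nbr S) < x with hBad
  set Y : (Fin (2*t) → V₁) → ℕ := fun T => #(Bad.filter fun S => S ⊆ A T) with hY
  have hNpos : (0:ℝ) < N := by exact_mod_cast hN
  -- sum of |A T|
  have hpiA : ∀ u : V₂, (univ.filter fun T : Fin (2*t) → V₁ => ∀ i, E (T i) u)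
      = Fintype.piFinset fun _ : Fin (2*t) => univ.filter fun v => E v u := by
    intro u; ext T; simp [Fintype.mem_piFinset]
  have h_sumA : ∑ T : Fin (2*t) → V₁, #(A T) = ∑ u : V₂, d u ^ (2*t) := by
    simp only [hA, hd]
    calc ∑ T : Fin (2*t) → V₁, #(univ.filter fun u : V₂ => ∀ i, E (T i) u)
        = ∑ T : Fin (2*t) → V₁, ∑ u : V₂, if ∀ i, E (T i) u then 1 else 0 :=
          Finset.sum_congr rfl fun T _ => Finset.card_filter _ _
      _ = ∑ u : V₂, ∑ T : Fin (2*t) → V₁, if ∀ i, E (T i) u then 1 else 0 :=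
          Finset.sum_comm
      _ = ∑ u : V₂, #(univ.filter fun T : Fin (2*t) → V₁ => ∀ i, E (T i) u) :=
          Finset.sum_congr rfl fun u _ => (Finset.card_filter _ _).symm
      _ = ∑ u : V₂, #(univ.filter fun v : V₁ => E v u) ^ (2*t) := by
          refine Finset.sum_congr rfl fun u _ => ?_
          rw [hpiA u, Fintype.card_piFinset]
          simp
  -- sum of Y T
  have hpiY : ∀ S : Finset V₂, (univ.filter fun T : Fin (2*t) → V₁ => S ⊆ A T)
      = Fintype.piFinset fun _ : Fin (2*t) => nbr S := by
    intro S
    ext T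
    simp only [mem_filter, mem_univ, true_and, Fintype.mem_piFinset, hA, hnbr,
      Finset.subset_iff, Finset.mem_filter]
    constructor
    · intro h i u hu; exact h hu i
    · intro h u hu i; exact h i u hu
  have h_sumY : ∑ T : Fin (2*t) → V₁, Y T = ∑ S ∈ Bad, #(nbr S) ^ (2*t) := by
    simp only [hY]
    calc ∑ T : Fin (2*t) → V₁, #(Bad.filter fun S => S ⊆ A T)
        = ∑ T : Fin (2*t) → V₁, ∑ S ∈ Bad, if S ⊆ A T then 1 else 0 :=
          Finset.sum_congr rfl fun T _ => Finset.card_filter _ _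
      _ = ∑ S ∈ Bad, ∑ T : Fin (2*t) → V₁, if S ⊆ A T then 1 else 0 :=
          Finset.sum_comm
      _ = ∑ S ∈ Bad, #(univ.filter fun T : Fin (2*t) → V₁ => S ⊆ A T) :=
          Finset.sum_congr rfl fun S _ => (Finset.card_filter _ _).symm
      _ = ∑ S ∈ Bad, #(nbr S) ^ (2*t) := by
          refine Finset.sum_congr rfl fun S _ => ?_
          rw [hpiY S, Fintype.card_piFinset]
          simp
  -- edge count
  have h_edge : ε * (N:ℝ)^2 ≤ ∑ u : V₂, (d u : ℝ) := by
    have hcount : #(univ.filter fun p : V₁ × V₂ => E p.1 p.2) = ∑ u : V₂, d u := by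
      rw [Finset.card_filter, Fintype.sum_prod_type, Finset.sum_comm]
      refine Finset.sum_congr rfl fun u _ => ?_
      rw [hd]
      exact (Finset.card_filter _ _).symm
    rw [hcount] at hE
    exact_mod_cast hE
  -- Jensen
  have h_jensen : ε^(2*t) * (N:ℝ)^(2*t+1) ≤ ∑ T : Fin (2*t) → V₁, ((#(A T) : ℕ) : ℝ) := by
    have hcast : ∑ T : Fin (2*t) → V₁, ((#(A T) : ℕ) : ℝ) = ∑ u : V₂, (d u : ℝ)^(2*t) := by
      rw [← Nat.cast_sum, h_sumA]
      push_cast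
      rfl
    rw [hcast]
    have hm1 : 2*t = (2*t-1) + 1 := by omega
    have hJ := pow_sum_div_card_le_sum_pow (s := (univ : Finset V₂))
      (f := fun u => (d u : ℝ)) (fun i _ => Nat.cast_nonneg _) (2*t-1)
    rw [Finset.card_univ, h2, div_le_iff₀ (pow_pos hNpos _)] at hJ
    have hkey : (ε * (N:ℝ)^2)^((2*t-1)+1) ≤ (∑ u : V₂, (d u:ℝ))^((2*t-1)+1) :=
      pow_le_pow_left₀ (mul_nonneg hε.le (sq_nonneg _)) h_edge _
    rw [hm1]
    have hcancel : ε^((2*t-1)+1) * (N:ℝ)^((2*t-1)+1+1) * (N:ℝ)^(2*t-1)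
        = (ε * (N:ℝ)^2)^((2*t-1)+1) := by ring
    have hNm : (0:ℝ) < (N:ℝ)^(2*t-1) := pow_pos hNpos _
    rw [← mul_le_mul_iff_of_pos_right hNm, hcancel]
    calc (ε * (N:ℝ)^2)^((2*t-1)+1) ≤ (∑ u : V₂, (d u:ℝ))^((2*t-1)+1) := hkey
      _ ≤ (∑ u : V₂, (d u:ℝ)^((2*t-1)+1)) * (N:ℝ)^(2*t-1) := hJ
  have h_badcard : #Bad ≤ N.choose t := by
    have hsub : Bad ⊆ powersetCard t (univ : Finset V₂) := by
      intro S hS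
      rw [hBad, Finset.mem_filter] at hS
      rw [Finset.mem_powersetCard]
      exact ⟨Finset.subset_univ _, hS.2.1⟩
    have := Finset.card_le_card hsub
    rwa [Finset.card_powersetCard, Finset.card_univ, h2] at this
  have h_sumYR : ∑ T : Fin (2*t) → V₁, ((Y T : ℕ) : ℝ) ≤ (N.choose t : ℝ) * (x:ℝ)^(2*t) := by
    have hnat : ∑ T : Fin (2*t) → V₁, Y T ≤ N.choose t * x^(2*t) := by
      rw [h_sumY]
      calc ∑ S ∈ Bad, #(nbr S)^(2*t)
          ≤ ∑ _S ∈ Bad, x^(2*t) := by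
            refine Finset.sum_le_sum fun S hS => ?_
            rw [hBad, Finset.mem_filter] at hS
            exact Nat.pow_le_pow_left hS.2.2.le _
        _ = #Bad * x^(2*t) := by rw [Finset.sum_const, smul_eq_mul]
        _ ≤ N.choose t * x^(2*t) := Nat.mul_le_mul_right _ h_badcard
    have hcast : ∑ T : Fin (2*t) → V₁, ((Y T : ℕ) : ℝ)
        = ((∑ T : Fin (2*t) → V₁, Y T : ℕ) : ℝ) := by push_cast; rfl
    rw [hcast]
    exact_mod_cast hnat
  set C : ℝ := (N.choose t : ℝ) with hC
  have hCpos : 0 < C := by rw [hC]; exact_mod_cast Nat.choose_pos htN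
  set β : ℝ := ε^(2*t) * (N:ℝ)^(2*t+1) / (2 * (x:ℝ)^(2*t) * C) with hβ
  have hβpos : 0 < β := by
    have hxpos : (0:ℝ) < x := by exact_mod_cast hx
    positivity
  haveI hV₁ : Nonempty V₁ := by
    rw [← Fintype.card_pos_iff, h1]; exact hN
  have h_avg : ∃ T : Fin (2*t) → V₁, ε^(2*t)*N/2 ≤ ((#(A T) : ℕ) : ℝ) - β * Y T := by
    by_contra hcon
    push_neg at hcon
    have hlt : ∑ T : Fin (2*t) → V₁, (((#(A T) : ℕ) : ℝ) - β * Y T)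
        < ∑ _T : Fin (2*t) → V₁, (ε^(2*t)*(N:ℝ)/2) :=
      Finset.sum_lt_sum_of_nonempty Finset.univ_nonempty (fun T _ => hcon T)
    rw [Finset.sum_const, Finset.card_univ, Fintype.card_fun, Fintype.card_fin, h1,
      nsmul_eq_mul] at hlt
    rw [Finset.sum_sub_distrib, ← Finset.mul_sum] at hlt
    have hsplit : ε^(2*t) * (N:ℝ)^(2*t+1) - β * ((N.choose t : ℝ) * (x:ℝ)^(2*t))
        ≤ ∑ T : Fin (2*t) → V₁, ((#(A T) : ℕ) : ℝ) - β * ∑ T : Fin (2*t) → V₁, ((Y T : ℕ) : ℝ) := by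
      have h2' : β * ∑ T : Fin (2*t) → V₁, ((Y T : ℕ) : ℝ)
          ≤ β * ((N.choose t : ℝ) * (x:ℝ)^(2*t)) :=
        mul_le_mul_of_nonneg_left h_sumYR hβpos.le
      linarith [h_jensen]
    have heq : β * ((N.choose t : ℝ) * (x:ℝ)^(2*t)) = ε^(2*t) * (N:ℝ)^(2*t+1) / 2 := by
      rw [hβ, hC]
      have hxne : ((x:ℝ))^(2*t) ≠ 0 := by
        have : (0:ℝ) < x := by exact_mod_cast hx
        positivity
      have hCne : (N.choose t : ℝ) ≠ 0 := ne_of_gt (by rw [← hC] at *; exact hCpos)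
      field_simp
    have hpow : (((N^(2*t) : ℕ)):ℝ) * (ε^(2*t)*(N:ℝ)/2) = ε^(2*t) * (N:ℝ)^(2*t+1) / 2 := by
      push_cast
      ring
    rw [hpow] at hlt
    rw [heq] at hsplit
    linarith
  obtain ⟨T, hT⟩ := h_avg
  have hYnn : (0:ℝ) ≤ β * Y T := by positivity
  have hAcard : ((#(A T) : ℕ) : ℝ) ≤ N := by
    have := Finset.card_le_card (Finset.subset_univ (A T))
    rw [Finset.card_univ, h2] at this
    exact_mod_cast this
  refine ⟨A T, by linarith, ?_⟩
  have hset : (univ.filter fun S : Finset V₂ => S ⊆ A T ∧ #S = t ∧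
      #(univ.filter fun v : V₁ => ∀ u ∈ S, E v u) < x) = Bad.filter fun S => S ⊆ A T := by
    ext S
    simp only [mem_filter, mem_univ, true_and, hBad, hnbr]
    tauto
  rw [hset]
  have hYrfl : (#(Bad.filter fun S => S ⊆ A T) : ℝ) = (Y T : ℝ) := rfl
  rw [hYrfl]
  -- from β * Y ≤ N
  have hεNnn : (0:ℝ) ≤ ε^(2*t)*N/2 := by positivity
  have hβY : β * Y T ≤ N := by linarith
  have hYle : (Y T : ℝ) ≤ (N:ℝ) / β := by
    rw [le_div_iff₀ hβpos]; linarith [mul_comm β (Y T : ℝ)]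
  have hfinal : (N:ℝ) / β = 2 * ε⁻¹^(2*t) * ((x:ℝ)/N)^(2*t) * C := by
    have hxpos : (0:ℝ) < x := by exact_mod_cast hx
    rw [hβ, inv_pow, div_pow]
    field_simp
    ring
  rw [hfinal] at hYle
  exact hYle

/-- Dependent random choice lemma: if `G = (V₁, V₂; E)` is a bipartite graph with
`|V₁| = |V₂| = N` and at least `ε N²` edges, then for all positive integers `t, x` there is
`A ⊆ V₂` with `|A| ≥ ε^{2t} N / 2` such that the number of `t`-element subsets `S` of `A` whose
common neighborhood has fewer than `x` elements is at most `2 ε^{-2t} (x/N)^{2t} C(N,t)`. -/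
theorem stmt_9 {V₁ V₂ : Type*} [Fintype V₁] [Fintype V₂] (E : V₁ → V₂ → Prop) (N : ℕ)
    (h1 : Fintype.card V₁ = N) (h2 : Fintype.card V₂ = N) (ε : ℝ) (hε : 0 < ε)
    (hE : ε * (N : ℝ) ^ 2 ≤ ({p : V₁ × V₂ | E p.1 p.2}.ncard : ℝ))
    (t x : ℕ) (ht : 0 < t) (hx : 0 < x) :
    ∃ A : Finset V₂, ε ^ (2 * t) * N / 2 ≤ (A.card : ℝ) ∧
      (({S : Finset V₂ | S ⊆ A ∧ S.card = t ∧
          {v : V₁ | ∀ u ∈ S, E v u}.ncard < x}.ncard : ℝ)) ≤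
        2 * ε⁻¹ ^ (2 * t) * ((x : ℝ) / N) ^ (2 * t) * (N.choose t) := by
  classical
  have hv : ∀ S : Finset V₂, {v : V₁ | ∀ u ∈ S, E v u}.ncard
      = #(univ.filter fun v => ∀ u ∈ S, E v u) := by
    intro S
    rw [show {v : V₁ | ∀ u ∈ S, E v u} = ↑(univ.filter fun v => ∀ u ∈ S, E v u) by
      ext v; simp, Set.ncard_coe_finset]
  have houter : ∀ A : Finset V₂, {S : Finset V₂ | S ⊆ A ∧ S.card = t ∧
      {v : V₁ | ∀ u ∈ S, E v u}.ncard < x}.ncard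
      = #(univ.filter fun S : Finset V₂ => S ⊆ A ∧ #S = t ∧
          #(univ.filter fun v : V₁ => ∀ u ∈ S, E v u) < x) := by
    intro A
    rw [show {S : Finset V₂ | S ⊆ A ∧ S.card = t ∧ {v : V₁ | ∀ u ∈ S, E v u}.ncard < x}
        = ↑(univ.filter fun S : Finset V₂ => S ⊆ A ∧ #S = t ∧
            #(univ.filter fun v : V₁ => ∀ u ∈ S, E v u) < x) by
      ext S; simp [hv], Set.ncard_coe_finset]
  rcases Nat.eq_zero_or_pos N with hN0 | hN
  · subst hN0
    refine ⟨∅, by simp, ?_⟩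
    have hempty : {S : Finset V₂ | S ⊆ (∅ : Finset V₂) ∧ S.card = t ∧
        {v : V₁ | ∀ u ∈ S, E v u}.ncard < x} = ∅ := by
      ext S
      simp only [Set.mem_setOf_eq, Set.mem_empty_iff_false, iff_false, not_and]
      intro hS hcard
      rw [Finset.subset_empty.mp hS, Finset.card_empty] at hcard
      omega
    rw [hempty, Set.ncard_empty]
    push_cast
    positivity
  rcases le_or_gt t N with htN | htN
  · -- main case
    have hE' : ε * (N : ℝ) ^ 2 ≤ (#(univ.filter fun p : V₁ × V₂ => E p.1 p.2) : ℝ) := by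
      rwa [show {p : V₁ × V₂ | E p.1 p.2} = ↑(univ.filter fun p : V₁ × V₂ => E p.1 p.2) by
        ext p; simp, Set.ncard_coe_finset] at hE
    obtain ⟨A, hA1, hA2⟩ := drc_main E N h1 h2 ε hε hN t x ht hx htN hE'
    refine ⟨A, hA1, ?_⟩
    rw [houter A]
    exact hA2
  · -- t > N : no t-subsets at all
    have hNpos : (0:ℝ) < N := by exact_mod_cast hN
    have hle : ({p : V₁ × V₂ | E p.1 p.2}.ncard : ℝ) ≤ (N:ℝ)^2 := by
      have h' : {p : V₁ × V₂ | E p.1 p.2}.ncard ≤ N * N := by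
        have := Set.ncard_le_ncard (Set.subset_univ {p : V₁ × V₂ | E p.1 p.2})
          Set.finite_univ
        rwa [Set.ncard_univ, Nat.card_eq_fintype_card, Fintype.card_prod, h1, h2] at this
      calc ({p : V₁ × V₂ | E p.1 p.2}.ncard : ℝ) ≤ ((N*N : ℕ) : ℝ) := by exact_mod_cast h'
        _ = (N:ℝ)^2 := by push_cast; ring
    have hN2 : (0:ℝ) < (N:ℝ)^2 := by positivity
    have hε1 : ε ≤ 1 := by nlinarith [hE, hle]
    have hεp : ε ^ (2*t) ≤ 1 := pow_le_one₀ hε.le hε1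
    refine ⟨univ, ?_, ?_⟩
    · rw [Finset.card_univ, h2]
      nlinarith
    · have hempty : {S : Finset V₂ | S ⊆ (univ : Finset V₂) ∧ S.card = t ∧
          {v : V₁ | ∀ u ∈ S, E v u}.ncard < x} = ∅ := by
        ext S
        simp only [Set.mem_setOf_eq, Set.mem_empty_iff_false, iff_false, not_and]
        intro _ hcard
        have := Finset.card_le_card (Finset.subset_univ S)
        rw [Finset.card_univ, h2, hcard] at this
        omega
      rw [hempty, Set.ncard_empty]
      push_cast
      positivity
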